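/- Let A₀ be a Hopf *-algebra spanned by the matrix coefficients u^α_{pq} of a family of mutually inequivalent irreducible unitary corepresentations indexed by α, with the one-dimensional trivial corepresentation indexed by α = 1, and assume the u^α_{pq} are linearly independent. Then the linear functional h : A₀ → ℂ defined by h(u^α_{pq}) = δ_{α,1} is the unique unital invariant functional: (ι ⊗ h)Φ(a) = h(a)1 and (h ⊗ ι)Φ(a) = h(a)1 for all a ∈ A₀, h(1) = 1, and any linear functional with these properties equals h. -/

import Mathlib

open TensorProduct Finset

/-- For a CQG (Hopf *-) algebra `A₀` with linear basis given by the matrix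
coefficients `u^α_{pq}` of a family of (unitary) corepresentations, with the
trivial one-dimensional corepresentation indexed by `α₀`, the functional
`h(u^α_{pq}) = δ_{α,α₀}` is the unique unital two-sided invariant functional:
`(ι ⊗ h)Φ(a) = h(a)1`, `(h ⊗ ι)Φ(a) = h(a)1` and `h(1) = 1`. -/
theorem cqg_haar_functional_unique
    (A : Type*) [Ring A] [Algebra ℂ A] [StarRing A] [StarModule ℂ A]
    (Φ : A →ₐ[ℂ] A ⊗[ℂ] A)
    (ι : Type*) [DecidableEq ι] (nn : ι → ℕ)
    (u : (α : ι) → Fin (nn α) → Fin (nn α) → A)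
    (b : Module.Basis ((α : ι) × (Fin (nn α) × Fin (nn α))) ℂ A)
    (hb : ∀ (α : ι) (p q : Fin (nn α)), b ⟨α, (p, q)⟩ = u α p q)
    (hcomatrix : ∀ (α : ι) (p q : Fin (nn α)),
      Φ (u α p q) = ∑ k, u α p k ⊗ₜ[ℂ] u α k q)
    (hunitary : ∀ (α : ι) (p q : Fin (nn α)),
      (∑ k, star (u α k p) * u α k q = if p = q then (1 : A) else 0) ∧
      (∑ k, u α p k * star (u α q k) = if p = q then (1 : A) else 0))
    (α₀ : ι) (hdim : nn α₀ = 1)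
    (htriv : ∀ p q : Fin (nn α₀), u α₀ p q = 1)
    (h : A →ₗ[ℂ] ℂ)
    (hdef : ∀ (α : ι) (p q : Fin (nn α)),
      h (u α p q) = if α = α₀ then 1 else 0) :
    (∀ a : A, (TensorProduct.rid ℂ A)
        ((TensorProduct.map LinearMap.id h) (Φ a)) = h a • 1) ∧
    (∀ a : A, (TensorProduct.lid ℂ A)
        ((TensorProduct.map h LinearMap.id) (Φ a)) = h a • 1) ∧
    (h 1 = 1) ∧
    (∀ h' : A →ₗ[ℂ] ℂ,
      (∀ a : A, (TensorProduct.rid ℂ A)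
          ((TensorProduct.map LinearMap.id h') (Φ a)) = h' a • 1) →
      (∀ a : A, (TensorProduct.lid ℂ A)
          ((TensorProduct.map h' LinearMap.id) (Φ a)) = h' a • 1) →
      h' 1 = 1 → h' = h) := by

  have hz : 0 < nn α₀ := by omega
  set z : Fin (nn α₀) := ⟨0, hz⟩ with hzdef
  have hsub : Subsingleton (Fin (nn α₀)) := by rw [hdim]; infer_instance
  have h1 : h 1 = 1 := by rw [← htriv z z, hdef]; simp
  have key₁ : ∀ (α : ι) (p q : Fin (nn α)),
      (TensorProduct.rid ℂ A) ((TensorProduct.map LinearMap.id h) (Φ (u α p q)))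
        = h (u α p q) • (1 : A) := by
    intro α p q
    rw [hcomatrix]
    simp only [map_sum, TensorProduct.map_tmul, LinearMap.id_coe, id_eq,
      TensorProduct.rid_tmul, hdef]
    by_cases hα : α = α₀
    · subst hα
      simp [htriv, hdim]
    · simp [hα]
  have key₂ : ∀ (α : ι) (p q : Fin (nn α)),
      (TensorProduct.lid ℂ A) ((TensorProduct.map h LinearMap.id) (Φ (u α p q)))
        = h (u α p q) • (1 : A) := by
    intro α p q
    rw [hcomatrix]
    simp only [map_sum, TensorProduct.map_tmul, LinearMap.id_coe, id_eq,
      TensorProduct.lid_tmul, hdef]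
    by_cases hα : α = α₀
    · subst hα
      simp [htriv, hdim]
    · simp [hα]
  have inv₁ : ∀ a : A, (TensorProduct.rid ℂ A)
      ((TensorProduct.map LinearMap.id h) (Φ a)) = h a • 1 := by
    intro a
    have eq₁ : ((TensorProduct.rid ℂ A).toLinearMap ∘ₗ
        (TensorProduct.map LinearMap.id h) ∘ₗ Φ.toLinearMap)
        = LinearMap.smulRight h (1 : A) := by
      apply Module.Basis.ext b
      rintro ⟨α, p, q⟩
      simp only [hb, LinearMap.comp_apply, AlgHom.toLinearMap_apply,
        LinearMap.smulRight_apply, LinearEquiv.coe_coe]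
      exact key₁ α p q
    simpa using LinearMap.congr_fun eq₁ a
  have inv₂ : ∀ a : A, (TensorProduct.lid ℂ A)
      ((TensorProduct.map h LinearMap.id) (Φ a)) = h a • 1 := by
    intro a
    have eq₂ : ((TensorProduct.lid ℂ A).toLinearMap ∘ₗ
        (TensorProduct.map h LinearMap.id) ∘ₗ Φ.toLinearMap)
        = LinearMap.smulRight h (1 : A) := by
      apply Module.Basis.ext b
      rintro ⟨α, p, q⟩
      simp only [hb, LinearMap.comp_apply, AlgHom.toLinearMap_apply,
        LinearMap.smulRight_apply, LinearEquiv.coe_coe]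
      exact key₂ α p q
    simpa using LinearMap.congr_fun eq₂ a
  refine ⟨inv₁, inv₂, h1, ?_⟩
  intro h' hR' hL' h'1
  apply Module.Basis.ext b
  rintro ⟨α, p, q⟩
  rw [hb, hdef]
  have e := congrArg h (hR' (u α p q))
  simp only [hcomatrix, map_sum, TensorProduct.map_tmul, LinearMap.id_coe, id_eq,
    TensorProduct.rid_tmul, map_smul, smul_eq_mul, h1, mul_one, hdef] at e
  by_cases hα : α = α₀
  · subst hα
    simp only [if_pos rfl, mul_one] at e ⊢
    rw [← e, Fintype.sum_subsingleton _ q, htriv, h'1]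
    simp
  · simp only [if_neg hα, mul_zero, Finset.sum_const_zero] at e ⊢
    exact e.symm
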